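/- Let X be a finite metric space with t_b(X) < t_d(X), and let v_d: X → X send each point x to the unique point at maximal distance from x. Then v_d is an involution: v_d(v_d(x)) = x for every x ∈ X. -/
import Mathlib


/-- The largest distance from `x` to any point of `X`. -/
noncomputable def ptTd (X : Type*) [MetricSpace X] (x : X) : ℝ :=
  sSup (Set.range fun y => dist x y)

/-- The second largest distance (counted with multiplicity over points) from `x`
to points of `X`. -/
noncomputable def ptTb (X : Type*) [MetricSpace X] (x : X) : ℝ :=
  sSup {r : ℝ | ∃ y z : X, y ≠ z ∧ r = min (dist x y) (dist x z)}

/-- `t_b(X) = max_{x ∈ X} t_b(x)`. -/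
noncomputable def tbX (X : Type*) [MetricSpace X] : ℝ :=
  sSup (Set.range (ptTb X))

/-- `t_d(X) = min_{x ∈ X} t_d(x)`. -/
noncomputable def tdX (X : Type*) [MetricSpace X] : ℝ :=
  sInf (Set.range (ptTd X))

/-- If `t_b(X) < t_d(X)` and `v_d` sends each point to the (unique) point at maximal
distance from it, then `v_d` is an involution. -/
theorem vd_involutive {X : Type*} [MetricSpace X] [Fintype X]
    (h : tbX X < tdX X) (vd : X → X)
    (hvd : ∀ x x' : X, x' ≠ vd x → dist x x' < dist x (vd x)) (x : X) :
    vd (vd x) = x := by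
  by_contra hne
  have : Nonempty X := ⟨x⟩
  have hdistmax : ∀ a y : X, dist a y ≤ dist a (vd a) := by
    intro a y
    by_cases hy : y = vd a
    · simp [hy]
    · exact (hvd a y hy).le
  have hfin : ∀ a : X, BddAbove (Set.range fun y => dist a y) :=
    fun a => (Set.finite_range _).bddAbove
  have hptTd_eq : ∀ a : X, ptTd X a = dist a (vd a) := by
    intro a
    refine le_antisymm ?_ (le_csSup (hfin a) ⟨vd a, rfl⟩)
    exact csSup_le (Set.range_nonempty _) (by rintro r ⟨y, rfl⟩; exact hdistmax a y)
  have hptTd_nonneg : ∀ a : X, 0 ≤ ptTd X a := by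
    intro a; rw [hptTd_eq]; exact dist_nonneg
  have h1 : tdX X ≤ ptTd X x :=
    csInf_le ⟨0, by rintro r ⟨a, rfl⟩; exact hptTd_nonneg a⟩ ⟨x, rfl⟩
  have hSfin : ∀ a : X,
      ({r : ℝ | ∃ y z : X, y ≠ z ∧ r = min (dist a y) (dist a z)}).Finite := by
    intro a
    have hsub : {r : ℝ | ∃ y z : X, y ≠ z ∧ r = min (dist a y) (dist a z)} ⊆
        (fun p : X × X => min (dist a p.1) (dist a p.2)) '' Set.univ := by
      rintro r ⟨y, z, _, rfl⟩; exact ⟨(y, z), trivial, rfl⟩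
    exact Set.Finite.subset (Set.finite_univ.image _) hsub
  have hxne : x ≠ vd (vd x) := fun hx => hne hx.symm
  have hlt : dist (vd x) x < dist (vd x) (vd (vd x)) := hvd (vd x) x hxne
  have h2 : dist (vd x) x ≤ ptTb X (vd x) := by
    apply le_csSup (hSfin (vd x)).bddAbove
    exact ⟨x, vd (vd x), hxne, (min_eq_left hlt.le).symm⟩
  have h3 : ptTb X (vd x) ≤ tbX X :=
    le_csSup (Set.finite_range _).bddAbove ⟨vd x, rfl⟩
  have h4 : ptTd X x = dist (vd x) x := by rw [hptTd_eq, dist_comm]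
  linarith
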